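/- arXiv:math/0304499 — 3 statements merged into one kernel-verified Lean document; each statement's English description precedes it below -/
import Mathlib

section
/- If a sequence of characteristic functions g_n, each of which is φ-infinitely divisible, converges pointwise to a characteristic function f, then f is φ-infinitely divisible. -/
open MeasureTheory Filter Topology

/-- `φ` is the Laplace transform of (the distribution of) a nonnegative random variable. -/
def IsLTR (φ : ℝ → ℝ) : Prop :=
  ∃ μ : Measure ℝ, IsProbabilityMeasure μ ∧ μ {x | x < 0} = 0 ∧
    ∀ s : ℝ, 0 ≤ s → φ s = ∫ x, Real.exp (-s * x) ∂μ

/-- `P` is the probability generating function of a nonnegative-integer-valued random variable. -/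
def IsPGF (P : ℝ → ℝ) : Prop :=
  ∃ p : ℕ → ℝ, (∀ n, 0 ≤ p n) ∧ (∑' n, p n) = 1 ∧
    ∀ s : ℝ, 0 ≤ s → s ≤ 1 → P s = ∑' n, p n * s ^ n

/-- `f` is the characteristic function of a probability distribution on `ℝ`. -/
def IsCF (f : ℝ → ℂ) : Prop :=
  ∃ μ : Measure ℝ, IsProbabilityMeasure μ ∧
    ∀ t : ℝ, f t = ∫ x, Complex.exp (Complex.I * (t * x)) ∂μ

/-- `φ` (as a function on the right complex half-plane) is the Laplace transform of a
nonnegative random variable. -/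
def IsLT (φ : ℂ → ℂ) : Prop :=
  ∃ μ : Measure ℝ, IsProbabilityMeasure μ ∧ μ {x | x < 0} = 0 ∧
    ∀ z : ℂ, 0 ≤ z.re → φ z = ∫ x, Complex.exp (-z * x) ∂μ

/-- `ω` is an infinitely divisible characteristic function. -/
def IsID (ω : ℝ → ℂ) : Prop :=
  IsCF ω ∧ ∀ n : ℕ, 0 < n → ∃ g : ℝ → ℂ, IsCF g ∧ ∀ t, ω t = g t ^ n

/-- `f` is φ-infinitely divisible: it is a pointwise limit of `φ (aₙ (1 - fₙ(t)))` for
positive constants `aₙ` and characteristic functions `fₙ`. -/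
def PhiID (φ : ℂ → ℂ) (f : ℝ → ℂ) : Prop :=
  ∃ a : ℕ → ℝ, (∀ n, 0 < a n) ∧ ∃ fn : ℕ → ℝ → ℂ, (∀ n, IsCF (fn n)) ∧
    ∀ t, Tendsto (fun n => φ ((a n : ℂ) * (1 - fn n t))) atTop (𝓝 (f t))

/-- `ω` is a stable characteristic function. -/
def IsStable (ω : ℝ → ℂ) : Prop :=
  IsCF ω ∧ ∀ n : ℕ, 0 < n → ∃ a : ℝ, 0 < a ∧ ∃ b : ℝ,
    ∀ t, ω t ^ n = ω (a * t) * Complex.exp (Complex.I * (b * t))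

open scoped ENNReal NNReal

section aux

noncomputable def cfOf (μ : Measure ℝ) (t : ℝ) : ℂ :=
  ∫ x, Complex.exp (Complex.I * (t * x)) ∂μ

lemma norm_cf_kernel (t x : ℝ) : ‖Complex.exp (Complex.I * (t * x))‖ = 1 := by
  rw [Complex.norm_exp]
  simp [Complex.mul_re]

lemma cf_kernel_cont (t : ℝ) : Continuous fun x : ℝ => Complex.exp (Complex.I * (t * x)) := by
  fun_prop

lemma cf_integrable (μ : Measure ℝ) [IsProbabilityMeasure μ] (t : ℝ) :
    Integrable (fun x : ℝ => Complex.exp (Complex.I * (t * x))) μ := by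
  refine Integrable.mono' (integrable_const 1) ((cf_kernel_cont t).aestronglyMeasurable) ?_
  exact Eventually.of_forall fun x => le_of_eq (norm_cf_kernel t x)

lemma cfOf_zero (μ : Measure ℝ) [IsProbabilityMeasure μ] : cfOf μ 0 = 1 := by
  simp [cfOf]

lemma norm_cfOf_le (μ : Measure ℝ) [IsProbabilityMeasure μ] (t : ℝ) : ‖cfOf μ t‖ ≤ 1 := by
  calc ‖cfOf μ t‖ ≤ ∫ x, ‖Complex.exp (Complex.I * (t * x))‖ ∂μ :=
        norm_integral_le_integral_norm _
    _ = 1 := by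
        simp only [norm_cf_kernel]
        simp

lemma re_cfOf_le (μ : Measure ℝ) [IsProbabilityMeasure μ] (t : ℝ) : (cfOf μ t).re ≤ 1 :=
  le_trans (Complex.re_le_norm _) (norm_cfOf_le μ t)

lemma cfOf_continuous (μ : Measure ℝ) [IsProbabilityMeasure μ] : Continuous (cfOf μ) := by
  refine continuous_of_dominated (fun t => (cf_kernel_cont t).aestronglyMeasurable)
    (fun t => Eventually.of_forall fun x => le_of_eq (norm_cf_kernel t x))
    (integrable_const 1) (Eventually.of_forall fun x => ?_)
  fun_prop

lemma re_cfOf (μ : Measure ℝ) [IsProbabilityMeasure μ] (t : ℝ) :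
    (cfOf μ t).re = ∫ x, Real.cos (t * x) ∂μ := by
  have := integral_re (𝕜 := ℂ) (cf_integrable μ t)
  simp only [RCLike.re_to_complex] at this
  rw [cfOf, ← this]
  congr 1; ext x
  rw [mul_comm Complex.I, ← Complex.ofReal_mul]
  exact Complex.exp_ofReal_mul_I_re (t*x)

section part2
variable (μ : Measure ℝ) [IsProbabilityMeasure μ]

lemma norm_exp_I_mul_sub_one_le (θ : ℝ) : ‖Complex.exp (Complex.I * θ) - 1‖ ≤ |θ| := by
  have hre : (Complex.exp (Complex.I * θ)).re = Real.cos θ := by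
    rw [mul_comm]; exact Complex.exp_ofReal_mul_I_re θ
  have him : (Complex.exp (Complex.I * θ)).im = Real.sin θ := by
    rw [mul_comm]; exact Complex.exp_ofReal_mul_I_im θ
  have h2 : ‖Complex.exp (Complex.I * θ) - 1‖ ^ 2 ≤ |θ| ^ 2 := by
    rw [Complex.sq_norm, Complex.normSq_apply]
    simp only [Complex.sub_re, Complex.sub_im, Complex.one_re, Complex.one_im, hre, him, sq_abs]
    nlinarith [Real.sin_sq_add_cos_sq θ, Real.one_sub_sq_div_two_le_cos (x := θ)]
  nlinarith [norm_nonneg (Complex.exp (Complex.I * θ) - 1), abs_nonneg θ]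

lemma norm_exp_I_mul_sub_one_le_two (θ : ℝ) : ‖Complex.exp (Complex.I * θ) - 1‖ ≤ 2 := by
  have h1 : ‖Complex.exp (Complex.I * θ)‖ = 1 := by
    rw [Complex.norm_exp]; simp [Complex.mul_re]
  calc ‖Complex.exp (Complex.I * θ) - 1‖ ≤ ‖Complex.exp (Complex.I * θ)‖ + ‖(1:ℂ)‖ :=
        norm_sub_le _ _
    _ ≤ 2 := by rw [h1]; norm_num

lemma cf_kernel_diff_le (t s R x : ℝ) (hR : 0 ≤ R) :
    ‖Complex.exp (Complex.I * (t * x)) - Complex.exp (Complex.I * (s * x))‖ ≤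
      |t - s| * R + Set.indicator {y : ℝ | R < |y|} (fun _ => 2) x := by
  have key : Complex.exp (Complex.I * (t * x)) - Complex.exp (Complex.I * (s * x)) =
      Complex.exp (Complex.I * (s * x)) * (Complex.exp (Complex.I * ((t - s) * x)) - 1) := by
    rw [mul_sub, ← Complex.exp_add]
    push_cast
    ring_nf
  have h1 : ‖Complex.exp (Complex.I * ((s : ℝ) * x))‖ = 1 := norm_cf_kernel s x
  rw [key, norm_mul, h1, one_mul]
  have hcast : ((t:ℂ) - s) * x = (((t - s) * x : ℝ) : ℂ) := by push_cast; ring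
  rw [hcast]
  by_cases hx : R < |x|
  · have : Set.indicator {y : ℝ | R < |y|} (fun _ => (2:ℝ)) x = 2 :=
      Set.indicator_of_mem (show x ∈ {y : ℝ | R < |y|} from hx) _
    rw [this]
    have := norm_exp_I_mul_sub_one_le_two ((t - s) * x)
    have h0 : 0 ≤ |t - s| * R := mul_nonneg (abs_nonneg _) hR
    linarith
  · have : Set.indicator {y : ℝ | R < |y|} (fun _ => (2:ℝ)) x = 0 :=
      Set.indicator_of_notMem (show x ∉ {y : ℝ | R < |y|} from hx) _
    rw [this, add_zero]
    calc ‖Complex.exp (Complex.I * ((t - s) * x : ℝ)) - 1‖ ≤ |(t - s) * x| :=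
          norm_exp_I_mul_sub_one_le _
      _ = |t - s| * |x| := abs_mul _ _
      _ ≤ |t - s| * R := by
          have : |x| ≤ R := not_lt.mp hx
          exact mul_le_mul_of_nonneg_left this (abs_nonneg _)

lemma measurableSet_tail (R : ℝ) : MeasurableSet {y : ℝ | R < |y|} :=
  (isOpen_lt continuous_const continuous_abs).measurableSet

lemma cf_increment (R : ℝ) (hR : 0 ≤ R) (t s : ℝ) :
    ‖cfOf μ t - cfOf μ s‖ ≤ |t - s| * R + 2 * (μ {y : ℝ | R < |y|}).toReal := by
  have hint : Integrable (fun x : ℝ => |t - s| * R +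
      Set.indicator {y : ℝ | R < |y|} (fun _ => (2:ℝ)) x) μ := by
    refine (integrable_const _).add ?_
    exact (integrable_indicator_iff (measurableSet_tail R)).mpr
      (integrableOn_const (measure_ne_top _ _))
  calc ‖cfOf μ t - cfOf μ s‖
      = ‖∫ x, (Complex.exp (Complex.I * (t * x)) - Complex.exp (Complex.I * (s * x))) ∂μ‖ := by
        rw [cfOf, cfOf, integral_sub (cf_integrable μ t) (cf_integrable μ s)]
    _ ≤ ∫ x, ‖Complex.exp (Complex.I * (t * x)) - Complex.exp (Complex.I * (s * x))‖ ∂μ :=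
        norm_integral_le_integral_norm _
    _ ≤ ∫ x, (|t - s| * R + Set.indicator {y : ℝ | R < |y|} (fun _ => (2:ℝ)) x) ∂μ := by
        refine integral_mono ((cf_integrable μ t).sub (cf_integrable μ s)).norm hint ?_
        exact fun x => cf_kernel_diff_le t s R x hR
    _ = |t - s| * R + 2 * (μ {y : ℝ | R < |y|}).toReal := by
        rw [integral_add (integrable_const _) ((integrable_indicator_iff (measurableSet_tail R)).mpr
          (integrableOn_const (measure_ne_top _ _)))]
        rw [integral_const, integral_indicator_const _ (measurableSet_tail R)]
        simp [mul_comm, Measure.real]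
end part2

section tail
variable (μ : Measure ℝ) [IsProbabilityMeasure μ]

lemma measurableSet_tail' (R : ℝ) : MeasurableSet {y : ℝ | R ≤ |y|} :=
  (isClosed_le continuous_const continuous_abs).measurableSet

lemma cos_integrable (u : ℝ) : Integrable (fun x : ℝ => Real.cos (u * x)) μ := by
  refine Integrable.mono' (integrable_const 1)
    ((Real.continuous_cos.comp (continuous_const.mul continuous_id)).aestronglyMeasurable) ?_
  exact Eventually.of_forall fun x => by
    rw [Real.norm_eq_abs]; exact Real.abs_cos_le_one _

lemma one_sub_re_cfOf (u : ℝ) :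
    1 - (cfOf μ u).re = ∫ x, (1 - Real.cos (u * x)) ∂μ := by
  rw [re_cfOf, integral_sub (integrable_const 1) (cos_integrable μ u)]
  simp

lemma inner_cos_integral (δ x : ℝ) (hδ : 0 < δ) (hx : x ≠ 0) :
    ∫ u in (-δ)..δ, (1 - Real.cos (u * x)) = 2 * δ - 2 * Real.sin (δ * x) / x := by
  rw [intervalIntegral.integral_sub (intervalIntegrable_const)
    (Continuous.intervalIntegrable (by continuity : Continuous fun u : ℝ => Real.cos (u * x)) _ _)]
  rw [intervalIntegral.integral_const, intervalIntegral.integral_comp_mul_right Real.cos hx,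
    integral_cos]
  have : Real.sin (-δ * x) = -Real.sin (δ * x) := by rw [neg_mul, Real.sin_neg]
  rw [this]
  simp only [smul_eq_mul]
  field_simp
  ring

lemma inner_cos_lower (δ x : ℝ) (hδ : 0 < δ) :
    δ * Set.indicator {y : ℝ | 2/δ ≤ |y|} (fun _ => (1:ℝ)) x ≤
      ∫ u in (-δ)..δ, (1 - Real.cos (u * x)) := by
  by_cases hx : 2/δ ≤ |x|
  · have hx0 : x ≠ 0 := by
      intro h; rw [h] at hx; simp at hx
      have : 0 < 2/δ := by positivity
      linarith
    rw [Set.indicator_of_mem (show x ∈ {y : ℝ | 2/δ ≤ |y|} from hx), mul_one,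
      inner_cos_integral δ x hδ hx0]
    have h2 : (0:ℝ) < |x| := abs_pos.mpr hx0
    have habs : |2 * Real.sin (δ * x) / x| ≤ 2 / |x| := by
      rw [abs_div, abs_mul, abs_two]
      have h1 := Real.abs_sin_le_one (δ * x)
      exact (div_le_div_iff_of_pos_right h2).mpr (by linarith)
    have h4 : 2 ≤ δ * |x| := by
      have := (div_le_iff₀ hδ).mp hx
      linarith [this, mul_comm |x| δ]
    have h5 : 2 / |x| ≤ δ := (div_le_iff₀ h2).mpr (by linarith [mul_comm δ |x|])
    have h6 := (abs_le.mp habs).1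
    have h7 := (abs_le.mp habs).2
    linarith
  · rw [Set.indicator_of_notMem (show x ∉ {y : ℝ | 2/δ ≤ |y|} from hx), mul_zero]
    refine intervalIntegral.integral_nonneg (by linarith) fun u _ => ?_
    nlinarith [Real.cos_le_one (u * x)]

end tail

section tail2
variable (μ : Measure ℝ) [IsProbabilityMeasure μ]

lemma cf_tail (δ : ℝ) (hδ : 0 < δ) :
    (μ {x : ℝ | 2/δ ≤ |x|}).toReal ≤ (1/δ) * ∫ u in (-δ)..δ, (1 - (cfOf μ u).re) := by
  haveI hfin : IsFiniteMeasure (volume.restrict (Set.Ioc (-δ) δ)) := ⟨by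
    rw [Measure.restrict_apply_univ]; exact measure_Ioc_lt_top⟩
  set ν := volume.restrict (Set.Ioc (-δ) δ) with hν
  have hF : Integrable (Function.uncurry fun (u x : ℝ) => 1 - Real.cos (u * x)) (ν.prod μ) := by
    refine Integrable.mono' (integrable_const 2)
      (Continuous.aestronglyMeasurable
        (continuous_const.sub (Real.continuous_cos.comp (continuous_fst.mul continuous_snd))))
      (Eventually.of_forall fun p => ?_)
    simp only [Function.uncurry]
    rw [Real.norm_eq_abs]
    refine abs_le.mpr ⟨?_, ?_⟩
    · nlinarith [Real.cos_le_one (p.1 * p.2)]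
    · nlinarith [Real.neg_one_le_cos (p.1 * p.2)]
  have hswap := integral_integral_swap hF
  have key : ∫ u in (-δ)..δ, (1 - (cfOf μ u).re) =
      ∫ x, (∫ u in (-δ)..δ, (1 - Real.cos (u * x))) ∂μ := by
    rw [intervalIntegral.integral_of_le (by linarith : -δ ≤ δ)]
    have : ∀ u : ℝ, 1 - (cfOf μ u).re = ∫ x, (1 - Real.cos (u * x)) ∂μ :=
      one_sub_re_cfOf μ
    calc ∫ u in Set.Ioc (-δ) δ, (1 - (cfOf μ u).re) ∂volume
        = ∫ u, (∫ x, (1 - Real.cos (u * x)) ∂μ) ∂ν := by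
          rw [hν]; exact integral_congr_ae (Eventually.of_forall fun u => this u)
      _ = ∫ x, (∫ u, (1 - Real.cos (u * x)) ∂ν) ∂μ := hswap
      _ = ∫ x, (∫ u in (-δ)..δ, (1 - Real.cos (u * x))) ∂μ := by
          refine integral_congr_ae (Eventually.of_forall fun x => ?_)
          exact (intervalIntegral.integral_of_le (by linarith : -δ ≤ δ)).symm
  have hG : Integrable (fun x => ∫ u in (-δ)..δ, (1 - Real.cos (u * x))) μ := by
    have h1 := Integrable.integral_prod_right hF
    simp only [Function.uncurry_apply_pair] at h1
    refine h1.congr (Eventually.of_forall fun x => ?_)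
    exact (intervalIntegral.integral_of_le (by linarith : -δ ≤ δ)).symm
  have hind : Integrable (fun x => δ * Set.indicator {y : ℝ | 2/δ ≤ |y|} (fun _ => (1:ℝ)) x) μ := by
    refine Integrable.const_mul ?_ δ
    exact (integrable_indicator_iff (measurableSet_tail' (2/δ))).mpr
      (integrableOn_const (measure_ne_top _ _))
  have hmono := integral_mono hind hG (fun x => inner_cos_lower δ x hδ)
  have hindval : ∫ x, δ * Set.indicator {y : ℝ | 2/δ ≤ |y|} (fun _ => (1:ℝ)) x ∂μ =
      δ * (μ {x : ℝ | 2/δ ≤ |x|}).toReal := by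
    rw [integral_const_mul, integral_indicator_const _ (measurableSet_tail' (2/δ))]
    simp [Measure.real]
  rw [hindval, ← key] at hmono
  rw [one_div, inv_mul_eq_div, le_div_iff₀ hδ]
  linarith [mul_comm δ (μ {x : ℝ | 2/δ ≤ |x|}).toReal]

end tail2

section helper

lemma abs_one_sub_re_le_two {z : ℂ} (hz : ‖z‖ ≤ 1) : ‖(1:ℝ) - z.re‖ ≤ 2 := by
  have h1 : |z.re| ≤ 1 := (Complex.abs_re_le_norm z).trans hz
  rw [Real.norm_eq_abs]
  rcases abs_le.mp h1 with ⟨h2, h3⟩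
  exact abs_le.mpr ⟨by linarith, by linarith⟩

lemma tendsto_interval_one_sub_re (δ : ℝ) (hδ : 0 < δ)
    (F : ℕ → ℝ → ℂ) (G : ℝ → ℂ)
    (hFc : ∀ k, Continuous (F k))
    (hFb : ∀ k u, ‖F k u‖ ≤ 1)
    (hFG : ∀ u, Tendsto (fun k => F k u) atTop (𝓝 (G u))) :
    Tendsto (fun k => ∫ u in (-δ)..δ, (1 - (F k u).re)) atTop
      (𝓝 (∫ u in (-δ)..δ, (1 - (G u).re))) := by
  have hle : -δ ≤ δ := by linarith
  haveI : IsFiniteMeasure (volume.restrict (Set.Ioc (-δ) δ)) := ⟨by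
    rw [Measure.restrict_apply_univ]; exact measure_Ioc_lt_top⟩
  simp only [intervalIntegral.integral_of_le hle]
  refine tendsto_integral_of_dominated_convergence (fun _ => 2)
    (fun k => (Continuous.aestronglyMeasurable (continuous_const.sub
      (Complex.continuous_re.comp (hFc k))))) (integrable_const 2)
    (fun k => Eventually.of_forall fun u => abs_one_sub_re_le_two (hFb k u))
    (Eventually.of_forall fun u => ?_)
  exact tendsto_const_nhds.sub ((Complex.continuous_re.tendsto _).comp (hFG u))

lemma enum_rat_near (e : ℕ → ℚ) (he : Function.Surjective e) (t η : ℝ) (hη : 0 < η) :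
    ∃ m : ℕ, |t - ((e m : ℚ) : ℝ)| < η := by
  obtain ⟨q, hq⟩ := exists_rat_near t hη
  obtain ⟨m, rfl⟩ := he q
  exact ⟨m, hq⟩

end helper

section diag

lemma exists_diag (h : ℕ → ℕ → ℝ → ℂ) (hcf : ∀ n k, IsCF (h n k))
    (g : ℕ → ℝ → ℂ) (hg : ∀ n, IsCF (g n)) (f : ℝ → ℂ) (hf : IsCF f)
    (hconv : ∀ n t, Tendsto (fun k => h n k t) atTop (𝓝 (g n t)))
    (hlim : ∀ t, Tendsto (fun n => g n t) atTop (𝓝 (f t))) :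
    ∃ K : ℕ → ℕ, ∀ t, Tendsto (fun n => h n (K n) t) atTop (𝓝 (f t)) := by
  classical
  obtain ⟨e, he⟩ := exists_surjective_nat ℚ
  choose μm hprob hrep using hcf
  choose νg hgprob hgrep using hg
  obtain ⟨νf, hfprob, hfrep⟩ := hf
  haveI := hfprob
  have hHfun : ∀ n k, h n k = cfOf (μm n k) := fun n k => funext (hrep n k)
  have hGfun : ∀ n, g n = cfOf (νg n) := fun n => funext (hgrep n)
  have hFfun : f = cfOf νf := funext hfrep
  have hHcont : ∀ n k, Continuous (h n k) := fun n k => by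
    haveI := hprob n k; rw [hHfun n k]; exact cfOf_continuous _
  have hGcont : ∀ n, Continuous (g n) := fun n => by
    haveI := hgprob n; rw [hGfun n]; exact cfOf_continuous _
  have hFcont : Continuous f := by rw [hFfun]; exact cfOf_continuous _
  have hHnorm : ∀ n k u, ‖h n k u‖ ≤ 1 := fun n k u => by
    haveI := hprob n k; rw [hHfun n k]; exact norm_cfOf_le _ u
  have hGnorm : ∀ n u, ‖g n u‖ ≤ 1 := fun n u => by
    haveI := hgprob n; rw [hGfun n]; exact norm_cfOf_le _ u
  have hf0 : f 0 = 1 := by rw [hFfun]; exact cfOf_zero νf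
  set δf : ℕ → ℝ := fun j => 1/(j+1) with hδf
  have hδpos : ∀ j, 0 < δf j := fun j => by positivity
  set Df : ℕ → ℝ := fun j => ∫ u in (-(δf j))..(δf j), (1 - (f u).re) with hDf
  set Jn : ℕ → ℕ → ℝ := fun n j => ∫ u in (-(δf j))..(δf j), (1 - (g n u).re) with hJn
  set In : ℕ → ℕ → ℕ → ℝ :=
    fun n k j => ∫ u in (-(δf j))..(δf j), (1 - (h n k u).re) with hIn
  have hJD : ∀ j, Tendsto (fun n => Jn n j) atTop (𝓝 (Df j)) := fun j =>
    tendsto_interval_one_sub_re (δf j) (hδpos j) g f hGcont hGnorm hlim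
  have hIJ : ∀ n j, Tendsto (fun k => In n k j) atTop (𝓝 (Jn n j)) := fun n j =>
    tendsto_interval_one_sub_re (δf j) (hδpos j) (h n) (g n) (hHcont n) (hHnorm n) (hconv n)
  -- diagonal selection
  have hsel : ∀ n, ∃ k,
      (∀ m ∈ Finset.range (n+1), ‖h n k ((e m : ℚ) : ℝ) - g n ((e m : ℚ) : ℝ)‖ < 1/(n+1)) ∧
      (∀ j ∈ Finset.range (n+1), |In n k j - Jn n j| < 1/(n+1)) := by
    intro n
    have hpos : (0:ℝ) < 1/(n+1) := by positivity
    have h1 : ∀ᶠ k in atTop, ∀ m ∈ Finset.range (n+1),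
        ‖h n k ((e m : ℚ) : ℝ) - g n ((e m : ℚ) : ℝ)‖ < 1/(n+1) := by
      rw [Filter.eventually_all_finset]
      intro m _
      filter_upwards [Metric.tendsto_nhds.mp (hconv n ((e m : ℚ) : ℝ)) _ hpos] with k hk
      rw [dist_eq_norm] at hk; exact hk
    have h2 : ∀ᶠ k in atTop, ∀ j ∈ Finset.range (n+1), |In n k j - Jn n j| < 1/(n+1) := by
      rw [Filter.eventually_all_finset]
      intro j _
      filter_upwards [Metric.tendsto_nhds.mp (hIJ n j) _ hpos] with k hk
      rw [Real.dist_eq] at hk; exact hk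
    exact (h1.and h2).exists
  choose K hK1 hK2 using hsel
  refine ⟨K, fun t => ?_⟩
  rw [Metric.tendsto_atTop]
  intro ε hε
  set c : ℝ := ε/8 with hc
  have hcpos : 0 < c := by positivity
  -- continuity of f at 0
  obtain ⟨δ0, hδ0pos, hδ0⟩ := Metric.continuousAt_iff.mp (hFcont.continuousAt (x := 0))
    (c/4) (by positivity)
  obtain ⟨j, hj⟩ := exists_nat_one_div_lt (K := ℝ) hδ0pos
  have hδj : δf j < δ0 := hj
  have hδjpos := hδpos j
  -- (1/δ j) * Df j ≤ c/2
  have hDfj : (1/(δf j)) * Df j ≤ c/2 := by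
    have hb : Df j ≤ (c/4) * (2 * δf j) := by
      have hmono : ∫ u in (-(δf j))..(δf j), (1 - (f u).re) ≤
          ∫ _ in (-(δf j))..(δf j), (c/4) := by
        refine intervalIntegral.integral_mono_on (by linarith)
          ((continuous_const.sub (Complex.continuous_re.comp hFcont)).intervalIntegrable _ _)
          (intervalIntegrable_const) (fun u hu => ?_)
        have habs : |u| < δ0 := by
          rw [abs_lt]; constructor <;> [linarith [hu.1]; linarith [hu.2]]
        have := hδ0 (x := u) (by rw [Real.dist_eq, sub_zero]; exact habs)
        rw [hf0, dist_eq_norm] at this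
        have hre : 1 - (f u).re ≤ ‖f u - 1‖ := by
          have h4 := Complex.abs_re_le_norm (f u - 1)
          have h5 : (f u - 1).re = (f u).re - 1 := by simp
          rw [h5] at h4
          linarith [h4, neg_le_abs ((f u).re - 1)]
        linarith
      rw [intervalIntegral.integral_const, smul_eq_mul] at hmono
      calc Df j ≤ (δf j - -(δf j)) * (c/4) := hmono
        _ = (c/4) * (2 * δf j) := by ring
    calc (1/(δf j)) * Df j ≤ (1/(δf j)) * ((c/4) * (2 * δf j)) := by
          apply mul_le_mul_of_nonneg_left hb; positivity
      _ = c/2 := by field_simp; ring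
  set R : ℝ := 2/(δf j) with hR
  have hRpos : 0 < R := by positivity
  -- continuity of f at t
  obtain ⟨η1, hη1pos, hη1⟩ := Metric.continuousAt_iff.mp (hFcont.continuousAt (x := t)) c hcpos
  set η : ℝ := min η1 (c/(R+1)) with hη
  have hηpos : 0 < η := lt_min hη1pos (by positivity)
  obtain ⟨m, hm⟩ := enum_rat_near e he t η hηpos
  set q : ℝ := ((e m : ℚ) : ℝ) with hq
  -- eventual conditions
  have E3 : ∀ᶠ n in atTop, ‖g n q - f q‖ < c := by
    filter_upwards [Metric.tendsto_nhds.mp (hlim q) _ hcpos] with n hn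
    rw [dist_eq_norm] at hn; exact hn
  have E4 : ∀ᶠ n in atTop, |Jn n j - Df j| < c * δf j / 4 := by
    filter_upwards [Metric.tendsto_nhds.mp (hJD j) (c * δf j / 4) (by positivity)] with n hn
    rw [Real.dist_eq] at hn; exact hn
  have E5 : ∀ᶠ n : ℕ in atTop, (1:ℝ)/(n+1) < min c (c * δf j / 4) := by
    have h0 : Tendsto (fun n : ℕ => (1:ℝ)/(n+1)) atTop (𝓝 0) :=
      tendsto_one_div_add_atTop_nhds_zero_nat
    exact h0.eventually_lt_const (by positivity)
  obtain ⟨N, hN⟩ := eventually_atTop.mp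
    ((eventually_ge_atTop m).and ((eventually_ge_atTop j).and (E3.and (E4.and E5))))
  refine ⟨N, fun n hn => ?_⟩
  obtain ⟨hn1, hn2, hn3, hn4, hn5⟩ := hN n hn
  have hn5a : (1:ℝ)/(n+1) < c := hn5.trans_le (min_le_left _ _)
  have hn5b : (1:ℝ)/(n+1) < c * δf j / 4 := hn5.trans_le (min_le_right _ _)
  haveI := hprob n (K n)
  set μ' := μm n (K n) with hμ'
  have hKa : ‖h n (K n) q - g n q‖ < 1/(n+1) :=
    hK1 n m (Finset.mem_range.mpr (Nat.lt_succ_of_le hn1))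
  have hKb : |In n (K n) j - Jn n j| < 1/(n+1) :=
    hK2 n j (Finset.mem_range.mpr (Nat.lt_succ_of_le hn2))
  -- tail bound
  have htail : (μ' {x : ℝ | 2/(δf j) ≤ |x|}).toReal ≤ c := by
    have h1 := cf_tail μ' (δf j) hδjpos
    have h2 : In n (K n) j = ∫ u in (-(δf j))..(δf j), (1 - (cfOf μ' u).re) := by
      rw [hIn]; simp only [hHfun n (K n)]; rfl
    have hInb : In n (K n) j ≤ Df j + c * δf j / 2 := by
      have a1 := abs_lt.mp hKb
      have a2 := abs_lt.mp hn4
      linarith [a1.2, a2.2, hn5b]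
    have h3 : (1/(δf j)) * In n (K n) j ≤ c := by
      calc (1/(δf j)) * In n (K n) j ≤ (1/(δf j)) * (Df j + c * δf j / 2) := by
            apply mul_le_mul_of_nonneg_left hInb; positivity
        _ = (1/(δf j)) * Df j + (1/(δf j)) * (c * δf j / 2) := by ring
        _ ≤ c/2 + c/2 := by
            have heq : (1/(δf j)) * (c * δf j / 2) = c/2 := by
              field_simp
            rw [heq]
            linarith [hDfj]
        _ = c := by ring
    rw [← h2] at h1
    linarith
  have htailR : (μ' {y : ℝ | R < |y|}).toReal ≤ c := by
    refine le_trans ?_ htail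
    refine ENNReal.toReal_mono (measure_ne_top μ' _) (measure_mono ?_)
    intro y hy
    simp only [Set.mem_setOf_eq] at hy ⊢
    rw [hR] at hy
    exact hy.le
  -- increment bound
  have hinc : ‖h n (K n) t - h n (K n) q‖ ≤ |t - q| * R + 2 * c := by
    have := cf_increment μ' R (le_of_lt hRpos) t q
    rw [hHfun n (K n)]
    linarith [this, htailR]
  have htq : |t - q| * R < c := by
    have h1 : |t - q| < c/(R+1) := lt_of_lt_of_le hm (min_le_right _ _)
    have h2 : |t - q| * R ≤ (c/(R+1)) * R := by
      apply mul_le_mul_of_nonneg_right (le_of_lt h1) (le_of_lt hRpos)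
    have h3 : (c/(R+1)) * R < c := by
      rw [div_mul_eq_mul_div, div_lt_iff₀ (by positivity)]
      nlinarith
    linarith
  have hfq : ‖f q - f t‖ < c := by
    have h1 : dist q t < η1 := by
      rw [Real.dist_eq, abs_sub_comm]
      exact lt_of_lt_of_le hm (min_le_left _ _)
    have := hη1 h1
    rw [dist_eq_norm] at this
    exact this
  -- assemble
  rw [dist_eq_norm]
  have tri : ‖h n (K n) t - f t‖ ≤ ‖h n (K n) t - h n (K n) q‖ + ‖h n (K n) q - g n q‖ +
      ‖g n q - f q‖ + ‖f q - f t‖ := by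
    have t1 : ‖h n (K n) t - f t‖ ≤ ‖h n (K n) t - f q‖ + ‖f q - f t‖ :=
      norm_sub_le_norm_sub_add_norm_sub _ _ _
    have t2 : ‖h n (K n) t - f q‖ ≤ ‖h n (K n) t - g n q‖ + ‖g n q - f q‖ :=
      norm_sub_le_norm_sub_add_norm_sub _ _ _
    have t3 : ‖h n (K n) t - g n q‖ ≤ ‖h n (K n) t - h n (K n) q‖ + ‖h n (K n) q - g n q‖ :=
      norm_sub_le_norm_sub_add_norm_sub _ _ _
    linarith
  have : ‖h n (K n) t - f t‖ < (c + 2*c) + c + c + c := by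
    have := hKa.trans hn5a
    linarith [tri, hinc, htq, hn3, hfq, hKa, hn5a]
  calc ‖h n (K n) t - f t‖ < (c + 2*c) + c + c + c := this
    _ ≤ ε := by rw [hc]; linarith

end diag

section compound

noncomputable def convPow (ν : Measure ℝ) : ℕ → Measure ℝ
  | 0 => Measure.dirac 0
  | m+1 => Measure.map (fun p : ℝ × ℝ => p.1 + p.2) (ν.prod (convPow ν m))

lemma convPow_prob (ν : Measure ℝ) [IsProbabilityMeasure ν] :
    ∀ m, IsProbabilityMeasure (convPow ν m)
  | 0 => by rw [convPow]; infer_instance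
  | m+1 => by
      haveI := convPow_prob ν m
      rw [convPow]
      exact Measure.isProbabilityMeasure_map ((measurable_fst.add measurable_snd).aemeasurable)

lemma cfOf_convPow (ν : Measure ℝ) [IsProbabilityMeasure ν] (t : ℝ) :
    ∀ m, cfOf (convPow ν m) t = (cfOf ν t) ^ m
  | 0 => by
      rw [convPow, cfOf, integral_dirac]
      norm_num
  | m+1 => by
      haveI := convPow_prob ν m
      rw [convPow, cfOf, integral_map (φ := fun p : ℝ × ℝ => p.1 + p.2)
        ((measurable_fst.add measurable_snd).aemeasurable)
        (cf_kernel_cont t).aestronglyMeasurable]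
      have hsplit : ∀ p : ℝ × ℝ, Complex.exp (Complex.I * (t * ((p.1 + p.2 : ℝ) : ℂ))) =
          Complex.exp (Complex.I * (t * p.1)) * Complex.exp (Complex.I * (t * p.2)) := by
        intro p
        rw [← Complex.exp_add]
        push_cast
        ring_nf
      calc ∫ p : ℝ × ℝ, Complex.exp (Complex.I * (t * ((p.1 + p.2 : ℝ) : ℂ)))
              ∂(ν.prod (convPow ν m))
          = ∫ p : ℝ × ℝ, Complex.exp (Complex.I * (t * p.1)) *
              Complex.exp (Complex.I * (t * p.2)) ∂(ν.prod (convPow ν m)) :=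
            integral_congr_ae (Eventually.of_forall hsplit)
        _ = (∫ x, Complex.exp (Complex.I * (t * x)) ∂ν) *
              ∫ x, Complex.exp (Complex.I * (t * x)) ∂(convPow ν m) :=
            integral_prod_mul (f := fun x : ℝ => Complex.exp (Complex.I * (t * x)))
              (g := fun x : ℝ => Complex.exp (Complex.I * (t * x)))
        _ = (cfOf ν t) ^ (m+1) := by
            rw [show (∫ x, Complex.exp (Complex.I * (t * x)) ∂(convPow ν m)) =
              cfOf (convPow ν m) t from rfl, cfOf_convPow ν t m]
            rw [show (∫ x, Complex.exp (Complex.I * (t * x)) ∂ν) = cfOf ν t from rfl,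
              pow_succ]
            ring

lemma compound_isCF (φ : ℂ → ℂ) (hφ : IsLT φ) (a : ℝ) (ha : 0 < a)
    (w : ℝ → ℂ) (hw : IsCF w) : IsCF (fun t => φ ((a:ℂ) * (1 - w t))) := by
  obtain ⟨μ, hμprob, hμ0, hφeq⟩ := hφ
  obtain ⟨ν, hνprob, hνrep⟩ := hw
  haveI := hμprob; haveI := hνprob
  have hwfun : w = cfOf ν := funext hνrep
  have hae : ∀ᵐ x ∂μ, 0 ≤ x := by
    rw [ae_iff]
    convert hμ0 using 2
    ext x; simp [not_le]
  set coeff : ℕ → ℝ → ℝ := fun m x => Real.exp (-(a*x)) * ((a*x)^m / m.factorial) with hcoeff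
  have hcoeffcont : ∀ m, Continuous (coeff m) := fun m => by
    rw [hcoeff]
    exact (Real.continuous_exp.comp (continuous_const.mul continuous_id).neg).mul
      ((((continuous_const.mul continuous_id).pow m)).div_const _)
  have hcoeffnn : ∀ (m : ℕ) (x : ℝ), 0 ≤ x → 0 ≤ coeff m x := by
    intro m x hx
    have h1 : 0 ≤ a*x := mul_nonneg ha.le hx
    exact mul_nonneg (Real.exp_pos _).le
      (div_nonneg (pow_nonneg h1 m) (Nat.cast_nonneg _))
  set cE : ℕ → ℝ≥0∞ := fun m => ∫⁻ x, ENNReal.ofReal (coeff m x) ∂μ with hcE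
  have hcEmeas : ∀ m, Measurable fun x => ENNReal.ofReal (coeff m x) := fun m =>
    ((hcoeffcont m).measurable).ennreal_ofReal
  have hsumcoeff : ∀ x : ℝ, Summable (fun m => coeff m x) := fun x =>
    (Real.summable_pow_div_factorial (a*x)).mul_left _
  have htsumcoeff : ∀ x : ℝ, ∑' m, coeff m x = 1 := by
    intro x
    simp only [hcoeff]
    rw [tsum_mul_left]
    have h2 : ∑' m : ℕ, (a*x)^m / m.factorial = Real.exp (a*x) := by
      rw [Real.exp_eq_exp_ℝ, NormedSpace.exp_eq_tsum_div]
    rw [h2, ← Real.exp_add]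
    norm_num
  have hsum : (∑' m, cE m) = 1 := by
    rw [hcE]
    rw [← lintegral_tsum (fun m => (hcEmeas m).aemeasurable)]
    have hone : ∀ᵐ x ∂μ, (∑' m, ENNReal.ofReal (coeff m x)) = 1 := by
      filter_upwards [hae] with x hx
      rw [← ENNReal.ofReal_tsum_of_nonneg (fun m => hcoeffnn m x hx) (hsumcoeff x),
        htsumcoeff x, ENNReal.ofReal_one]
    rw [lintegral_congr_ae hone, lintegral_one, measure_univ]
  have hcEne : ∀ m, cE m ≠ ⊤ := fun m =>
    ne_top_of_le_ne_top (by rw [hsum]; exact ENNReal.one_ne_top) (ENNReal.le_tsum m)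
  set ρ : Measure ℝ := Measure.sum (fun m => cE m • convPow ν m) with hρ
  have hρuniv : ρ Set.univ = 1 := by
    rw [hρ, Measure.sum_apply _ MeasurableSet.univ]
    have heach : ∀ m : ℕ, (cE m • convPow ν m) Set.univ = cE m := by
      intro m
      haveI := convPow_prob ν m
      rw [Measure.smul_apply, measure_univ, smul_eq_mul, mul_one]
    rw [tsum_congr heach, hsum]
  haveI hρprob : IsProbabilityMeasure ρ := ⟨hρuniv⟩
  refine ⟨ρ, hρprob, fun t => ?_⟩
  have hwnorm : ‖w t‖ ≤ 1 := by rw [hwfun]; exact norm_cfOf_le ν t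
  have hwre : (w t).re ≤ 1 := le_trans (Complex.re_le_norm _) hwnorm
  have hzre : (0:ℝ) ≤ ((a:ℂ) * (1 - w t)).re := by
    have : ((a:ℂ) * (1 - w t)).re = a * (1 - (w t).re) := by
      simp [Complex.mul_re]
    rw [this]
    nlinarith
  show φ ((a:ℂ) * (1 - w t)) = ∫ x, Complex.exp (Complex.I * ((t:ℂ) * (x:ℂ))) ∂ρ
  rw [hφeq _ hzre]
  -- pointwise series expansion
  have hpt : ∀ x : ℝ, Complex.exp (-((a:ℂ) * (1 - w t)) * x) =
      ∑' m, ((coeff m x : ℝ) : ℂ) * (w t)^m := by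
    intro x
    have h1 : -((a:ℂ) * (1 - w t)) * x = ((-(a*x) : ℝ) : ℂ) + ((a*x : ℝ) : ℂ) * (w t) := by
      push_cast; ring
    rw [h1, Complex.exp_add]
    have h2 : Complex.exp (((a*x:ℝ):ℂ) * w t) = ∑' m, (((a*x:ℝ):ℂ) * w t)^m / m.factorial := by
      rw [Complex.exp_eq_exp_ℂ, NormedSpace.exp_eq_tsum_div]
    rw [h2, ← tsum_mul_left]
    refine tsum_congr fun m => ?_
    simp only [hcoeff]
    rw [← Complex.ofReal_exp]
    push_cast
    ring
  -- interchange sum and integral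
  have hTmeas : ∀ m : ℕ, AEStronglyMeasurable (fun x : ℝ => ((coeff m x : ℝ):ℂ) * (w t)^m) μ :=
    fun m => ((Complex.continuous_ofReal.comp (hcoeffcont m)).mul
      continuous_const).aestronglyMeasurable
  have hbound : (∑' m : ℕ, ∫⁻ x, ‖((coeff m x : ℝ):ℂ) * (w t)^m‖₊ ∂μ) ≠ ⊤ := by
    have hle : ∀ m : ℕ, (∫⁻ x, ‖((coeff m x : ℝ):ℂ) * (w t)^m‖₊ ∂μ) ≤ cE m := by
      intro m
      rw [hcE]
      refine lintegral_mono_ae ?_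
      filter_upwards [hae] with x hx
      rw [← enorm_eq_nnnorm, ← ofReal_norm]
      apply ENNReal.ofReal_le_ofReal
      have hnn := hcoeffnn m x hx
      rw [norm_mul, Complex.norm_real, Real.norm_eq_abs, abs_of_nonneg hnn]
      calc coeff m x * ‖(w t)^m‖ ≤ coeff m x * 1 := by
            refine mul_le_mul_of_nonneg_left ?_ hnn
            rw [norm_pow]
            exact pow_le_one₀ (norm_nonneg _) hwnorm
        _ = coeff m x := mul_one _
    exact ne_top_of_le_ne_top (by rw [hsum]; exact ENNReal.one_ne_top)
      (ENNReal.tsum_le_tsum hle)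
  have hLHS : (∫ x, Complex.exp (-((a:ℂ) * (1 - w t)) * x) ∂μ) =
      ∑' m, ((cE m).toReal : ℂ) * (w t)^m := by
    rw [integral_congr_ae (Eventually.of_forall hpt), integral_tsum hTmeas hbound]
    refine tsum_congr fun m => ?_
    rw [show (fun x : ℝ => ((coeff m x : ℝ):ℂ) * (w t)^m) =
      fun x : ℝ => ((coeff m x : ℝ):ℂ) • (w t)^m from rfl]
    rw [integral_smul_const]
    have hofr : (∫ x, ((coeff m x : ℝ) : ℂ) ∂μ) = ((∫ x, coeff m x ∂μ : ℝ) : ℂ) :=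
      integral_ofReal
    rw [hofr]
    have hreal : (∫ x, coeff m x ∂μ) = (cE m).toReal := by
      have hnnae : 0 ≤ᵐ[μ] fun x => coeff m x := by
        filter_upwards [hae] with x hx
        exact hcoeffnn m x hx
      rw [integral_eq_lintegral_of_nonneg_ae hnnae (hcoeffcont m).aestronglyMeasurable]
    rw [hreal, smul_eq_mul]
  have hRHS : (∫ x, Complex.exp (Complex.I * (t*x)) ∂ρ) =
      ∑' m, ((cE m).toReal : ℂ) * (w t)^m := by
    have hint : Integrable (fun x : ℝ => Complex.exp (Complex.I * (t*x))) ρ :=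
      cf_integrable ρ t
    rw [hρ] at hint ⊢
    rw [integral_sum_measure hint]
    refine tsum_congr fun m => ?_
    haveI := convPow_prob ν m
    rw [integral_smul_measure]
    have : (∫ x, Complex.exp (Complex.I * (t*x)) ∂(convPow ν m)) = (w t)^m := by
      rw [show (∫ x, Complex.exp (Complex.I * (t*x)) ∂(convPow ν m)) =
        cfOf (convPow ν m) t from rfl, cfOf_convPow ν t m, hwfun]
    rw [this, Complex.real_smul]
  rw [hLHS, ← hRHS]

end compound

end aux

theorem stmt_6 (φ : ℂ → ℂ) (hφ : IsLT φ) (g : ℕ → ℝ → ℂ) (hg : ∀ n, IsCF (g n))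
    (hgID : ∀ n, PhiID φ (g n)) (f : ℝ → ℂ) (hf : IsCF f)
    (hlim : ∀ t, Tendsto (fun n => g n t) atTop (𝓝 (f t))) :
    PhiID φ f := by
  choose a hapos fn hfncf hconv using hgID
  have hcf : ∀ n k, IsCF (fun t => φ ((a n k : ℂ) * (1 - fn n k t))) :=
    fun n k => compound_isCF φ hφ (a n k) (hapos n k) (fn n k) (hfncf n k)
  obtain ⟨K, hK⟩ := exists_diag (fun n k t => φ ((a n k : ℂ) * (1 - fn n k t))) hcf g hg f hf
    (fun n t => hconv n t) hlim
  exact ⟨fun n => a n (K n), fun n => hapos n (K n), fun n => fn n (K n),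
    fun n => hfncf n (K n), fun t => hK t⟩
end

section
/- Suppose φ is a Laplace transform whose corresponding distribution is self-decomposable (class L), i.e., for every 0 < c < 1 there exists a Laplace transform φ_c with φ(s) = φ(cs)·φ_c(s) for all s > 0. If f(t) = φ(ψ(t)) where ψ(t) = λ|t|^α (a strictly stable exponent with ψ(ct) = c^α ψ(t)), then f is the characteristic function of a self-decomposable (class L) distribution: for every 0 < b < 1 there exists a characteristic function f_b with f(t) = f(bt)·f_b(t). -/
open MeasureTheory Filter Topology

theorem stmt_12 (φ : ℝ → ℝ) (hφ : IsLTR φ)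
    (hsd : ∀ c : ℝ, 0 < c → c < 1 →
      ∃ φc : ℝ → ℝ, IsLTR φc ∧ ∀ s : ℝ, 0 < s → φ s = φ (c * s) * φc s)
    (lam α : ℝ) (hlam : 0 < lam) (hα : 0 < α) (hα2 : α ≤ 2)
    (hstable : IsCF (fun t => Complex.exp (-(lam * |t| ^ α : ℝ))))
    (f : ℝ → ℂ) (hfdef : ∀ t, f t = (φ (lam * |t| ^ α) : ℂ)) :
    ∀ b : ℝ, 0 < b → b < 1 → ∃ fb : ℝ → ℂ, IsCF fb ∧ ∀ t, f t = f (b * t) * fb t := by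
  intro b hb0 hb1
  obtain ⟨μs, hμsP, hμseq⟩ := hstable
  have hc0 : (0:ℝ) < b ^ α := Real.rpow_pos_of_pos hb0 α
  have hc1 : b ^ α < 1 := Real.rpow_lt_one hb0.le hb1 hα
  obtain ⟨φc, ⟨ν, hνP, hνneg, hνeq⟩, hmul⟩ := hsd (b ^ α) hc0 hc1
  set β : ℝ := 1 / α with hβ
  have hβα : β * α = 1 := one_div_mul_cancel hα.ne'
  have hgm : Measurable (fun p : ℝ × ℝ => p.1 ^ β * p.2) := by fun_prop
  set μ' := Measure.map (fun p : ℝ × ℝ => p.1 ^ β * p.2) (ν.prod μs) with hμ'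
  have hμ'P : IsProbabilityMeasure μ' := Measure.isProbabilityMeasure_map hgm.aemeasurable
  have haeν : ∀ᵐ x ∂ν, 0 ≤ x := by
    rw [ae_iff]
    simpa [not_le] using hνneg
  -- the key identity: the CF of μ' is φc (lam * |t|^α)
  have key : ∀ t : ℝ, (∫ x, Complex.exp (Complex.I * (t * x)) ∂μ')
      = (φc (lam * |t| ^ α) : ℂ) := by
    intro t
    have hcm : Measurable fun p : ℝ × ℝ =>
        Complex.exp (Complex.I * (t * ((p.1 ^ β * p.2 : ℝ) : ℂ))) := by fun_prop
    have hint : Integrable (fun p : ℝ × ℝ =>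
        Complex.exp (Complex.I * (t * ((p.1 ^ β * p.2 : ℝ) : ℂ)))) (ν.prod μs) := by
      refine Integrable.mono' (integrable_const 1) hcm.aestronglyMeasurable ?_
      filter_upwards with p
      rw [Complex.norm_exp]
      norm_num [Complex.mul_re, Complex.mul_im]
    have hmap : (∫ x, Complex.exp (Complex.I * (t * x)) ∂μ')
        = ∫ p : ℝ × ℝ, Complex.exp (Complex.I * (t * ((p.1 ^ β * p.2 : ℝ) : ℂ))) ∂(ν.prod μs) := by
      rw [hμ', integral_map hgm.aemeasurable]
      exact (Complex.continuous_exp.comp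
        (continuous_const.mul (continuous_const.mul Complex.continuous_ofReal))).aestronglyMeasurable
    rw [hmap, integral_prod _ hint]
    have hinner : ∀ x : ℝ, (∫ y, Complex.exp (Complex.I * (t * ((x ^ β * y : ℝ) : ℂ))) ∂μs)
        = Complex.exp (-(lam * |x ^ β * t| ^ α : ℝ)) := by
      intro x
      have h1 : (∫ y, Complex.exp (Complex.I * (t * ((x ^ β * y : ℝ) : ℂ))) ∂μs)
          = ∫ y, Complex.exp (Complex.I * (((x ^ β * t : ℝ) : ℂ) * y)) ∂μs := by
        apply integral_congr_ae
        filter_upwards with y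
        congr 1
        push_cast
        ring
      rw [h1]
      exact (hμseq (x ^ β * t)).symm
    calc (∫ x, ∫ y, Complex.exp (Complex.I * (t * ((x ^ β * y : ℝ) : ℂ))) ∂μs ∂ν)
        = ∫ x, Complex.exp (-(lam * |x ^ β * t| ^ α : ℝ)) ∂ν := by
          exact integral_congr_ae (Filter.Eventually.of_forall hinner)
      _ = ∫ x, ((Real.exp (-(lam * |t| ^ α) * x) : ℝ) : ℂ) ∂ν := by
          apply integral_congr_ae
          filter_upwards [haeν] with x hx
          have hxb : (0:ℝ) ≤ x ^ β := Real.rpow_nonneg hx β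
          have h2 : |x ^ β * t| ^ α = x * |t| ^ α := by
            rw [abs_mul, abs_of_nonneg hxb, Real.mul_rpow hxb (abs_nonneg t),
              ← Real.rpow_mul hx, hβα, Real.rpow_one]
          rw [h2, ← Complex.ofReal_neg, ← Complex.ofReal_exp, Complex.ofReal_inj]
          congr 1
          ring
      _ = ((∫ x, Real.exp (-(lam * |t| ^ α) * x) ∂ν : ℝ) : ℂ) := integral_ofReal
      _ = (φc (lam * |t| ^ α) : ℂ) := by
          rw [← hνeq (lam * |t| ^ α)
            (mul_nonneg hlam.le (Real.rpow_nonneg (abs_nonneg t) α))]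
  refine ⟨fun t => ∫ x, Complex.exp (Complex.I * (t * x)) ∂μ', ⟨μ', hμ'P, fun t => rfl⟩, ?_⟩
  intro t
  simp only [key, hfdef]
  by_cases ht : t = 0
  · obtain ⟨μφ, hμφP, _, hφeq⟩ := hφ
    have hφ0 : φ 0 = 1 := by
      rw [hφeq 0 le_rfl]
      simp
    have hφc0 : φc 0 = 1 := by
      rw [hνeq 0 le_rfl]
      simp
    subst ht
    simp [Real.zero_rpow hα.ne', hφ0, hφc0]
  · have hs : 0 < lam * |t| ^ α :=
      mul_pos hlam (Real.rpow_pos_of_pos (abs_pos.mpr ht) α)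
    have habs : lam * |b * t| ^ α = b ^ α * (lam * |t| ^ α) := by
      rw [abs_mul, abs_of_pos hb0, Real.mul_rpow hb0.le (abs_nonneg t)]
      ring
    rw [habs, ← Complex.ofReal_mul, ← hmul _ hs]
end

section
/- Let φ be a Laplace transform of a positive random variable U, and for each θ > 0 let N_θ have PGF P_θ(s) = s^j φ((1 - s^m)/θ) (j ≥ 0, m ≥ 1 fixed integers), independent of an i.i.d. array {X_{θ,i}} with characteristic function f_θ. If the characteristic functions satisfy P_θ(f_θ(t)) → φ(-m log g(t)) pointwise as θ → 0 for some characteristic function g, then lim_{θ→0} f_θ(t) = 1 for every t ∈ ℝ. -/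
open MeasureTheory Filter Topology

namespace Stmt17

noncomputable def cf (ν : Measure ℝ) (t : ℝ) : ℂ := ∫ x, Complex.exp (Complex.I * (t * x)) ∂ν

lemma norm_char (t x : ℝ) : ‖Complex.exp (Complex.I * ((t : ℂ) * (x : ℂ)))‖ = 1 := by
  rw [Complex.norm_exp]
  simp [Complex.mul_re]

lemma continuous_char (t : ℝ) : Continuous fun x : ℝ => Complex.exp (Complex.I * (t * x)) := by
  fun_prop

lemma integrable_char (ν : Measure ℝ) [IsProbabilityMeasure ν] (t : ℝ) :
    Integrable (fun x : ℝ => Complex.exp (Complex.I * (t * x))) ν := by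
  refine (integrable_const (1 : ℝ)).mono' ((continuous_char t).aestronglyMeasurable) ?_
  exact Eventually.of_forall fun x => le_of_eq (norm_char t x)

lemma cf_zero (ν : Measure ℝ) [IsProbabilityMeasure ν] : cf ν 0 = 1 := by
  simp [cf]

lemma norm_cf_le_one (ν : Measure ℝ) [IsProbabilityMeasure ν] (t : ℝ) : ‖cf ν t‖ ≤ 1 := by
  calc ‖cf ν t‖ ≤ ∫ x, ‖Complex.exp (Complex.I * (t * x))‖ ∂ν :=
        norm_integral_le_integral_norm _
    _ = 1 := by simp only [norm_char]; simp

lemma cs_integral (ν : Measure ℝ) [IsProbabilityMeasure ν] (U V : ℝ → ℂ)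
    (hU : AEStronglyMeasurable U ν) (hV : AEStronglyMeasurable V ν)
    (hUb : ∀ x, ‖U x‖ ≤ 2) (hVb : ∀ x, ‖V x‖ ≤ 2) :
    ‖∫ x, U x * V x ∂ν‖ ≤
      Real.sqrt (∫ x, ‖U x‖ ^ 2 ∂ν) * Real.sqrt (∫ x, ‖V x‖ ^ 2 ∂ν) := by
  have hpq : Real.HolderConjugate 2 2 := Real.HolderConjugate.two_two
  have hUm : MemLp U (ENNReal.ofReal 2) ν := MemLp.of_bound hU 2 (Eventually.of_forall hUb)
  have hVm : MemLp V (ENNReal.ofReal 2) ν := MemLp.of_bound hV 2 (Eventually.of_forall hVb)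
  have h := MeasureTheory.integral_mul_norm_le_Lp_mul_Lq hpq hUm hVm
  have h2 : ∀ W : ℝ → ℂ, (∫ x, ‖W x‖ ^ (2:ℝ) ∂ν) ^ (1/(2:ℝ)) =
      Real.sqrt (∫ x, ‖W x‖ ^ 2 ∂ν) := by
    intro W
    rw [Real.sqrt_eq_rpow]
    congr 1
    refine integral_congr_ae (Eventually.of_forall fun x => ?_)
    simp only [Real.rpow_two]
  calc ‖∫ x, U x * V x ∂ν‖ ≤ ∫ x, ‖U x * V x‖ ∂ν := norm_integral_le_integral_norm _
    _ = ∫ x, ‖U x‖ * ‖V x‖ ∂ν := by simp [norm_mul]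
    _ ≤ (∫ x, ‖U x‖ ^ (2:ℝ) ∂ν) ^ (1/(2:ℝ)) * (∫ x, ‖V x‖ ^ (2:ℝ) ∂ν) ^ (1/(2:ℝ)) := h
    _ = _ := by rw [h2 U, h2 V]

lemma sub_sq_norm (z w : ℂ) :
    ‖z - w‖ ^ 2 = ‖z‖ ^ 2 - 2 * ((starRingEnd ℂ) w * z).re + ‖w‖ ^ 2 := by
  simp only [Complex.sq_norm, Complex.normSq_apply, Complex.sub_re,
    Complex.sub_im, Complex.mul_re, Complex.conj_re, Complex.conj_im]
  ring

lemma second_moment (ν : Measure ℝ) [IsProbabilityMeasure ν] (a : ℝ) :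
    ∫ x, ‖Complex.exp (Complex.I * (a * x)) - cf ν a‖ ^ 2 ∂ν = 1 - ‖cf ν a‖ ^ 2 := by
  set α := cf ν a with hα
  have expand : ∀ x : ℝ, ‖Complex.exp (Complex.I * (a * x)) - α‖ ^ 2 =
      1 - 2 * ((starRingEnd ℂ) α * Complex.exp (Complex.I * (a * x))).re + ‖α‖ ^ 2 := by
    intro x
    rw [sub_sq_norm, norm_char]; norm_num
  have hint : Integrable (fun x : ℝ => ((starRingEnd ℂ) α * Complex.exp (Complex.I * (a * x))).re) ν :=
    ((integrable_char ν a).const_mul ((starRingEnd ℂ) α)).re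
  have i1 : Integrable (fun x : ℝ => 1 - 2 * ((starRingEnd ℂ) α * Complex.exp (Complex.I * (a * x))).re) ν :=
    (integrable_const 1).sub (hint.const_mul 2)
  have i2 : Integrable (fun x : ℝ => 2 * ((starRingEnd ℂ) α * Complex.exp (Complex.I * (a * x))).re) ν :=
    hint.const_mul 2
  simp_rw [expand]
  rw [integral_add i1 (integrable_const _),
    integral_sub (integrable_const 1) i2, integral_const_mul, integral_const,
    integral_const]
  have hre : ∫ x, ((starRingEnd ℂ) α * Complex.exp (Complex.I * (a * x))).re ∂ν
      = ((starRingEnd ℂ) α * α).re := by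
    have h := integral_re ((integrable_char ν a).const_mul ((starRingEnd ℂ) α))
    simp only [RCLike.re_to_complex] at h
    rw [h, integral_const_mul]
    rfl
  rw [hre, mul_comm ((starRingEnd ℂ) α) α, Complex.mul_conj]
  simp
  rw [Complex.sq_norm]
  ring

lemma cf_cov (ν : Measure ℝ) [IsProbabilityMeasure ν] (a b : ℝ) :
    ‖cf ν (a + b) - cf ν a * cf ν b‖ ≤
      Real.sqrt (1 - ‖cf ν a‖ ^ 2) * Real.sqrt (1 - ‖cf ν b‖ ^ 2) := by
  set α := cf ν a with hα
  set β := cf ν b with hβ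
  set U : ℝ → ℂ := fun x => Complex.exp (Complex.I * (a * x)) - α with hU
  set V : ℝ → ℂ := fun x => Complex.exp (Complex.I * (b * x)) - β with hV
  have key1 : ∫ x, U x * V x ∂ν = cf ν (a + b) - α * β := by
    have expand : ∀ x : ℝ, U x * V x =
        Complex.exp (Complex.I * (((a + b) : ℝ) * x))
          - α * Complex.exp (Complex.I * (b * x))
          - β * Complex.exp (Complex.I * (a * x)) + α * β := by
      intro x
      have hAB : Complex.exp (Complex.I * (a * x)) * Complex.exp (Complex.I * (b * x))
          = Complex.exp (Complex.I * (((a + b) : ℝ) * x)) := by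
        rw [← Complex.exp_add]; congr 1; push_cast; ring
      simp only [hU, hV]
      rw [← hAB]; ring
    have j1 : Integrable (fun x : ℝ => Complex.exp (Complex.I * (((a + b) : ℝ) * x))
        - α * Complex.exp (Complex.I * (b * x)) - β * Complex.exp (Complex.I * (a * x))) ν :=
      ((integrable_char ν (a+b)).sub ((integrable_char ν b).const_mul α)).sub
          ((integrable_char ν a).const_mul β)
    have j2 : Integrable (fun x : ℝ => Complex.exp (Complex.I * (((a + b) : ℝ) * x))
        - α * Complex.exp (Complex.I * (b * x))) ν :=
      (integrable_char ν (a+b)).sub ((integrable_char ν b).const_mul α)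
    have j3 : Integrable (fun x : ℝ => α * Complex.exp (Complex.I * ((b:ℝ) * x))) ν :=
      (integrable_char ν b).const_mul α
    have j4 : Integrable (fun x : ℝ => β * Complex.exp (Complex.I * ((a:ℝ) * x))) ν :=
      (integrable_char ν a).const_mul β
    simp_rw [expand]
    rw [integral_add j1 (integrable_const _), integral_sub j2 j4,
      integral_sub (integrable_char ν (a+b)) j3,
      integral_const_mul, integral_const_mul, integral_const]
    have h1 : ∫ x, Complex.exp (Complex.I * (((a + b) : ℝ) * x)) ∂ν = cf ν (a+b) := rfl
    have h2 : ∫ x, Complex.exp (Complex.I * ((b : ℝ) * x)) ∂ν = β := rfl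
    have h3 : ∫ x, Complex.exp (Complex.I * ((a : ℝ) * x)) ∂ν = α := rfl
    rw [h1, h2, h3]
    simp
    ring
  have hUb : ∀ x, ‖U x‖ ≤ 2 := by
    intro x
    calc ‖U x‖ ≤ ‖Complex.exp (Complex.I * (a * x))‖ + ‖α‖ := norm_sub_le _ _
      _ ≤ 1 + 1 := add_le_add (le_of_eq (norm_char a x)) (norm_cf_le_one ν a)
      _ = 2 := by norm_num
  have hVb : ∀ x, ‖V x‖ ≤ 2 := by
    intro x
    calc ‖V x‖ ≤ ‖Complex.exp (Complex.I * (b * x))‖ + ‖β‖ := norm_sub_le _ _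
      _ ≤ 1 + 1 := add_le_add (le_of_eq (norm_char b x)) (norm_cf_le_one ν b)
      _ = 2 := by norm_num
  have := cs_integral ν U V
    (((continuous_char a).aestronglyMeasurable).sub aestronglyMeasurable_const)
    (((continuous_char b).aestronglyMeasurable).sub aestronglyMeasurable_const) hUb hVb
  rw [key1, second_moment ν a, second_moment ν b] at this
  exact this

lemma cf_pow_approx (ν : Measure ℝ) [IsProbabilityMeasure ν] (u : ℝ) (N : ℕ) :
    ‖cf ν (N * u) - (cf ν u) ^ N‖ ≤ N * Real.sqrt (1 - ‖cf ν u‖ ^ 2) := by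
  induction N with
  | zero => simp [cf_zero]
  | succ N ih =>
    have hs : ((N + 1 : ℕ) : ℝ) * u = (N : ℝ) * u + u := by push_cast; ring
    have hnn : (0:ℝ) ≤ 1 - ‖cf ν u‖ ^ 2 := by
      have := norm_cf_le_one ν u
      nlinarith [norm_nonneg (cf ν u)]
    have h1 : ‖cf ν ((N : ℝ) * u + u) - cf ν ((N : ℝ) * u) * cf ν u‖ ≤
        Real.sqrt (1 - ‖cf ν u‖ ^ 2) := by
      refine (cf_cov ν ((N : ℝ) * u) u).trans ?_
      have : Real.sqrt (1 - ‖cf ν ((N : ℝ) * u)‖ ^ 2) ≤ 1 := by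
        refine Real.sqrt_le_one.mpr ?_
        nlinarith [norm_nonneg (cf ν ((N : ℝ) * u))]
      nlinarith [Real.sqrt_nonneg (1 - ‖cf ν u‖ ^ 2)]
    calc ‖cf ν ((N + 1 : ℕ) * u) - (cf ν u) ^ (N + 1)‖
        = ‖(cf ν ((N : ℝ) * u + u) - cf ν ((N : ℝ) * u) * cf ν u)
            + (cf ν ((N : ℝ) * u) - (cf ν u) ^ N) * cf ν u‖ := by
          rw [hs]; congr 1; ring
      _ ≤ ‖cf ν ((N : ℝ) * u + u) - cf ν ((N : ℝ) * u) * cf ν u‖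
            + ‖(cf ν ((N : ℝ) * u) - (cf ν u) ^ N) * cf ν u‖ := norm_add_le _ _
      _ ≤ Real.sqrt (1 - ‖cf ν u‖ ^ 2) + (N * Real.sqrt (1 - ‖cf ν u‖ ^ 2)) * 1 := by
          refine add_le_add h1 ?_
          rw [norm_mul]
          exact mul_le_mul ih (norm_cf_le_one ν u) (norm_nonneg _) (by positivity)
      _ = (N + 1 : ℕ) * Real.sqrt (1 - ‖cf ν u‖ ^ 2) := by push_cast; ring

lemma norm_sub_one_le (z : ℂ) (hz : ‖z‖ ≤ 1) : ‖z - 1‖ ≤ Real.sqrt (2 * (1 - z.re)) := by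
  rw [← Real.sqrt_sq (norm_nonneg (z - 1))]
  apply Real.sqrt_le_sqrt
  have h1 : z.re ^ 2 + z.im ^ 2 ≤ 1 := by
    have h2 : ‖z‖ ^ 2 ≤ 1 := pow_le_one₀ (norm_nonneg _) hz
    calc z.re ^ 2 + z.im ^ 2 = ‖z‖ ^ 2 := by
          rw [Complex.sq_norm, Complex.normSq_apply]; ring
      _ ≤ 1 := h2
  have hexp : ‖z - 1‖ ^ 2 = z.re ^ 2 + z.im ^ 2 - 2 * z.re + 1 := by
    rw [Complex.sq_norm, Complex.normSq_apply]
    simp [Complex.sub_re, Complex.sub_im]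
    ring
  rw [hexp]; linarith

end Stmt17

theorem stmt_17 (φ : ℂ → ℂ) (μ : Measure ℝ) (hprob : IsProbabilityMeasure μ)
    (hpos : μ {x | x ≤ 0} = 0)
    (hLT : ∀ z : ℂ, 0 ≤ z.re → φ z = ∫ x, Complex.exp (-z * x) ∂μ)
    (j m : ℕ) (hm : 1 ≤ m)
    (f : ℝ → ℝ → ℂ) (hf : ∀ θ : ℝ, 0 < θ → IsCF (f θ))
    (g : ℝ → ℂ) (hg : IsCF g)
    (hconv : ∀ t, Tendsto (fun θ : ℝ => (f θ t) ^ j * φ ((1 - (f θ t) ^ m) / (θ : ℂ)))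
        (𝓝[>] 0) (𝓝 (φ (-(m : ℂ) * Complex.log (g t))))) :
    ∀ t, Tendsto (fun θ : ℝ => f θ t) (𝓝[>] 0) (𝓝 1) := by
  haveI := hprob
  have hae : ∀ᵐ x ∂μ, 0 < x := by
    rw [ae_iff]
    simpa [not_lt] using hpos
  -- ψ : real Laplace transform bounds on |φ|
  set ψ : ℝ → ℝ := fun s => ∫ x, Real.exp (-s * x) ∂μ with hψdef
  have hψint : ∀ s : ℝ, 0 ≤ s → Integrable (fun x : ℝ => Real.exp (-s * x)) μ := by
    intro s hs
    refine (integrable_const (1 : ℝ)).mono'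
      (Continuous.aestronglyMeasurable (by fun_prop)) ?_
    filter_upwards [hae] with x hx
    rw [Real.norm_eq_abs, Real.abs_exp]
    exact Real.exp_le_one_iff.mpr (by nlinarith)
  have hφ_norm : ∀ z : ℂ, 0 ≤ z.re → ‖φ z‖ ≤ ψ z.re := by
    intro z hz
    rw [hLT z hz]
    refine norm_integral_le_of_norm_le (hψint z.re hz) (Eventually.of_forall fun x => ?_)
    rw [Complex.norm_exp]
    apply le_of_eq
    congr 1
    simp [Complex.mul_re]
  have hψ0 : Tendsto ψ atTop (𝓝 0) := by
    have h := tendsto_integral_filter_of_dominated_convergence (μ := μ)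
      (F := fun (s : ℝ) (x : ℝ) => Real.exp (-s * x)) (f := fun _ => (0 : ℝ))
      (bound := fun _ => (1 : ℝ)) (l := atTop)
      (Eventually.of_forall fun s => Continuous.aestronglyMeasurable (by fun_prop))
      (by
        filter_upwards [eventually_ge_atTop (0 : ℝ)] with s hs
        filter_upwards [hae] with x hx
        rw [Real.norm_eq_abs, Real.abs_exp]
        exact Real.exp_le_one_iff.mpr (by nlinarith))
      (integrable_const 1)
      (by
        filter_upwards [hae] with x hx
        have h1 : Tendsto (fun s : ℝ => s * x) atTop atTop :=
          Tendsto.atTop_mul_const hx tendsto_id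
        have h2 : Tendsto (fun s : ℝ => -s * x) atTop atBot := by
          simp only [neg_mul]
          exact tendsto_neg_atBot_iff.mpr h1
        exact Real.tendsto_exp_atBot.comp h2)
    simpa only [integral_zero] using h
  -- g facts
  obtain ⟨νg, hνgP, hgrep⟩ := hg
  haveI := hνgP
  have hgle : ∀ t, ‖g t‖ ≤ 1 := fun t => by
    rw [hgrep t]; exact Stmt17.norm_cf_le_one νg t
  have hgcont : Tendsto g (𝓝 0) (𝓝 1) := by
    have h := tendsto_integral_filter_of_dominated_convergence (μ := νg)
      (F := fun (t x : ℝ) => Complex.exp (Complex.I * (t * x))) (f := fun _ => (1 : ℂ))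
      (bound := fun _ => (1 : ℝ)) (l := 𝓝 (0 : ℝ))
      (Eventually.of_forall fun t => (Stmt17.continuous_char t).aestronglyMeasurable)
      (Eventually.of_forall fun t =>
        Eventually.of_forall fun x => le_of_eq (Stmt17.norm_char t x))
      (integrable_const 1)
      (Eventually.of_forall fun x => by
        have hc : Continuous fun t : ℝ => Complex.exp (Complex.I * (t * x)) := by fun_prop
        have := hc.tendsto 0
        simpa using this)
    refine Tendsto.congr (fun t => (hgrep t).symm) ?_
    simpa using h
  -- the limit function L
  set L : ℝ → ℂ := fun t => φ (-(m : ℂ) * Complex.log (g t)) with hLdef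
  have hzre : ∀ t, 0 ≤ (-(m : ℂ) * Complex.log (g t)).re := by
    intro t
    have h1 : (-(m : ℂ) * Complex.log (g t)).re = -((m : ℝ) * (Complex.log (g t)).re) := by
      simp [Complex.mul_re]
    rw [h1, Complex.log_re]
    have hlog : Real.log ‖g t‖ ≤ 0 :=
      Real.log_nonpos (norm_nonneg _) (hgle t)
    have hm0 : (0:ℝ) ≤ (m : ℝ) := Nat.cast_nonneg m
    nlinarith
  have hlogt : Tendsto (fun t => -(m : ℂ) * Complex.log (g t)) (𝓝 0) (𝓝 0) := by
    have hc : ContinuousAt Complex.log 1 := continuousAt_clog Complex.one_mem_slitPlane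
    have h2 : Tendsto (fun t => Complex.log (g t)) (𝓝 0) (𝓝 0) := by
      have := hc.tendsto.comp hgcont
      simpa [Complex.log_one, Function.comp_def] using this
    have := h2.const_mul (-(m : ℂ))
    simpa using this
  have hL1 : Tendsto L (𝓝 0) (𝓝 1) := by
    set z : ℝ → ℂ := fun t => -(m : ℂ) * Complex.log (g t) with hzdef
    have h := tendsto_integral_filter_of_dominated_convergence (μ := μ)
      (F := fun (t : ℝ) (x : ℝ) => Complex.exp (-(z t) * x)) (f := fun _ => (1 : ℂ))
      (bound := fun _ => (1 : ℝ)) (l := 𝓝 (0 : ℝ))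
      (Eventually.of_forall fun t => Continuous.aestronglyMeasurable (by fun_prop))
      (Eventually.of_forall fun t => by
        filter_upwards [hae] with x hx
        rw [Complex.norm_exp]
        refine Real.exp_le_one_iff.mpr ?_
        have hre : (-(z t) * (x : ℂ)).re = -((z t).re * x) := by simp [Complex.mul_re]
        rw [hre]
        have := hzre t
        nlinarith)
      (integrable_const 1)
      (Eventually.of_forall fun x => by
        have hc : Continuous fun w : ℂ => Complex.exp (-w * x) := by fun_prop
        have := (hc.tendsto 0).comp hlogt
        simpa [Function.comp_def] using this)
    have hφeq : ∀ t, L t = ∫ x, Complex.exp (-(z t) * x) ∂μ := fun t => hLT _ (hzre t)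
    refine Tendsto.congr (fun t => (hφeq t).symm) ?_
    simpa using h
  -- δ such that ‖L u‖ ≥ 1/2 for |u| < δ
  obtain ⟨δ, hδ0, hδ2⟩ : ∃ δ > 0, ∀ u : ℝ, |u| < δ → 1/2 ≤ ‖L u‖ := by
    have h := hL1 (Metric.ball_mem_nhds (1 : ℂ) (by norm_num : (0:ℝ) < 1/2))
    rw [mem_map, Metric.mem_nhds_iff] at h
    obtain ⟨δ, hδ0, hball⟩ := h
    refine ⟨δ, hδ0, fun u hu => ?_⟩
    have hmem : u ∈ Metric.ball (0 : ℝ) δ := by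
      simpa [Real.dist_eq] using hu
    have h2 : ‖L u - 1‖ < 1/2 := by
      have := hball hmem
      simpa [Metric.mem_ball, dist_eq_norm] using this
    have h4 : ‖(1 : ℂ)‖ - ‖L u‖ ≤ ‖L u - 1‖ := by
      calc ‖(1 : ℂ)‖ - ‖L u‖ ≤ ‖(1 : ℂ) - L u‖ := norm_sub_norm_le 1 (L u)
        _ = ‖L u - 1‖ := by rw [norm_sub_rev]
    rw [norm_one] at h4
    linarith
  -- S threshold for ψ
  obtain ⟨S, hS⟩ : ∃ S : ℝ, ∀ s ≥ S, ψ s < 1/4 := by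
    have h := hψ0.eventually (gt_mem_nhds (by norm_num : (0:ℝ) < 1/4))
    exact eventually_atTop.mp h
  -- Step C: behaviour at small u
  have hC : ∀ u : ℝ, |u| < δ →
      Tendsto (fun θ : ℝ => (f θ u) ^ m) (𝓝[>] (0:ℝ)) (𝓝 1) ∧
      Tendsto (fun θ : ℝ => ‖f θ u‖) (𝓝[>] (0:ℝ)) (𝓝 1) := by
    intro u hu
    have hLu := hδ2 u hu
    have hprod := hconv u
    have hev1 : ∀ᶠ θ in 𝓝[>] (0:ℝ),
        1/4 < ‖(f θ u) ^ j * φ ((1 - (f θ u) ^ m) / (θ : ℂ))‖ := by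
      have h := hprod.eventually (Metric.ball_mem_nhds (L u) (by norm_num : (0:ℝ) < 1/4))
      filter_upwards [h] with θ hθ
      have h2 : ‖(f θ u) ^ j * φ ((1 - (f θ u) ^ m) / (θ : ℂ)) - L u‖ < 1/4 := by
        simpa [Metric.mem_ball, dist_eq_norm] using hθ
      have h4 : ‖L u‖ - ‖(f θ u) ^ j * φ ((1 - (f θ u) ^ m) / (θ : ℂ))‖ ≤
          ‖(f θ u) ^ j * φ ((1 - (f θ u) ^ m) / (θ : ℂ)) - L u‖ := by
        calc ‖L u‖ - ‖(f θ u) ^ j * φ ((1 - (f θ u) ^ m) / (θ : ℂ))‖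
            ≤ ‖L u - (f θ u) ^ j * φ ((1 - (f θ u) ^ m) / (θ : ℂ))‖ := norm_sub_norm_le _ _
          _ = _ := by rw [norm_sub_rev]
      linarith
    have hevθ : ∀ᶠ θ in 𝓝[>] (0:ℝ), (0:ℝ) < θ := self_mem_nhdsWithin
    have hnorm_ev : ∀ᶠ θ in 𝓝[>] (0:ℝ), ‖f θ u‖ ≤ 1 := by
      filter_upwards [hevθ] with θ hθpos
      obtain ⟨ν, hνP, hνrep⟩ := hf θ hθpos
      haveI := hνP
      rw [hνrep u]
      exact Stmt17.norm_cf_le_one ν u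
    have hkey : ∀ᶠ θ in 𝓝[>] (0:ℝ),
        0 ≤ 1 - ((f θ u) ^ m).re ∧ 1 - ((f θ u) ^ m).re ≤ S * θ := by
      filter_upwards [hev1, hevθ, hnorm_ev] with θ h1 hθpos hn1
      have hnm : ‖(f θ u) ^ m‖ ≤ 1 := by
        rw [norm_pow]; exact pow_le_one₀ (norm_nonneg _) hn1
      have hre1 : ((f θ u) ^ m).re ≤ 1 :=
        le_trans (Complex.re_le_norm _) (by rwa [])
      refine ⟨by linarith, ?_⟩
      by_contra hcon
      push_neg at hcon
      have hSle : S ≤ (1 - ((f θ u) ^ m).re) / θ := by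
        rw [le_div_iff₀ hθpos]; linarith
      have hψlt := hS _ hSle
      have hz : ((1 - (f θ u) ^ m) / (θ : ℂ)).re = (1 - ((f θ u) ^ m).re) / θ := by
        rw [Complex.div_ofReal_re]
        simp [Complex.sub_re]
      have hbound : ‖(f θ u) ^ j * φ ((1 - (f θ u) ^ m) / (θ : ℂ))‖ ≤
          ψ ((1 - ((f θ u) ^ m).re) / θ) := by
        rw [norm_mul]
        have h5 : ‖φ ((1 - (f θ u) ^ m) / (θ : ℂ))‖ ≤ ψ ((1 - ((f θ u) ^ m).re) / θ) := by
          have hz0 : 0 ≤ ((1 - (f θ u) ^ m) / (θ : ℂ)).re := by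
            rw [hz]
            exact div_nonneg (by linarith) hθpos.le
          have := hφ_norm _ hz0
          rwa [hz] at this
        calc ‖(f θ u) ^ j‖ * ‖φ ((1 - (f θ u) ^ m) / (θ : ℂ))‖
            ≤ 1 * ψ ((1 - ((f θ u) ^ m).re) / θ) := by
              refine mul_le_mul ?_ h5 (norm_nonneg _) one_pos.le
              rw [norm_pow]; exact pow_le_one₀ (norm_nonneg _) hn1
          _ = _ := one_mul _
      linarith
    have hS0 : Tendsto (fun θ : ℝ => S * θ) (𝓝[>] (0:ℝ)) (𝓝 0) := by
      have h : Tendsto (fun θ : ℝ => S * θ) (𝓝 (0:ℝ)) (𝓝 (S * 0)) :=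
        (continuous_const.mul continuous_id).tendsto 0
      simpa using h.mono_left nhdsWithin_le_nhds
    have hre_t : Tendsto (fun θ : ℝ => 1 - ((f θ u) ^ m).re) (𝓝[>] (0:ℝ)) (𝓝 0) :=
      squeeze_zero' (hkey.mono fun θ h => h.1) (hkey.mono fun θ h => h.2) hS0
    have hm1 : Tendsto (fun θ : ℝ => (f θ u) ^ m) (𝓝[>] (0:ℝ)) (𝓝 1) := by
      rw [tendsto_iff_norm_sub_tendsto_zero]
      refine squeeze_zero' (Eventually.of_forall fun θ => norm_nonneg _) ?_ ?_
        (g := fun θ => Real.sqrt (2 * (1 - ((f θ u) ^ m).re)))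
      · filter_upwards [hnorm_ev] with θ h
        have hz : ‖(f θ u) ^ m‖ ≤ 1 := by
          rw [norm_pow]; exact pow_le_one₀ (norm_nonneg _) h
        exact Stmt17.norm_sub_one_le _ hz
      · have h2 : Tendsto (fun θ : ℝ => 2 * (1 - ((f θ u) ^ m).re)) (𝓝[>] (0:ℝ)) (𝓝 0) := by
          simpa using hre_t.const_mul 2
        have h3 := (Real.continuous_sqrt.tendsto 0).comp h2
        rw [Real.sqrt_zero] at h3
        exact h3
    have hmod : Tendsto (fun θ : ℝ => ‖f θ u‖) (𝓝[>] (0:ℝ)) (𝓝 1) := by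
      have hlow : ∀ᶠ θ in 𝓝[>] (0:ℝ), ‖f θ u‖ ^ m ≤ ‖f θ u‖ := by
        filter_upwards [hnorm_ev] with θ h
        exact pow_le_of_le_one (norm_nonneg _) h (by omega)
      have hlowt : Tendsto (fun θ : ℝ => ‖f θ u‖ ^ m) (𝓝[>] (0:ℝ)) (𝓝 1) := by
        have := hm1.norm
        simpa [norm_pow] using this
      exact tendsto_of_tendsto_of_tendsto_of_le_of_le' hlowt tendsto_const_nhds hlow
        (hnorm_ev.mono fun θ h => h)
    exact ⟨hm1, hmod⟩
  -- main conclusion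
  intro t
  set K : ℕ := ⌈|t| / δ⌉₊ + 1 with hK
  set N : ℕ := m * K with hN
  have hKpos : (0:ℝ) < K := by
    rw [hK]; push_cast; positivity
  have hNpos : (0:ℝ) < N := by
    rw [hN]
    push_cast
    have : (1:ℝ) ≤ m := by exact_mod_cast hm
    nlinarith
  set u : ℝ := t / N with hu
  have hud : |u| < δ := by
    have h1 : |t| / δ < K := by
      calc |t| / δ ≤ (⌈|t| / δ⌉₊ : ℝ) := Nat.le_ceil _
        _ < K := by rw [hK]; push_cast; linarith
    have h2 : |t| < K * δ := by rwa [div_lt_iff₀ hδ0] at h1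
    have hKN : (K : ℝ) ≤ N := by
      rw [hN]
      push_cast
      have : (1:ℝ) ≤ m := by exact_mod_cast hm
      nlinarith
    have h3 : |u| = |t| / N := by
      rw [hu, abs_div, abs_of_pos hNpos]
    rw [h3, div_lt_iff₀ hNpos]
    nlinarith
  obtain ⟨hm1, hmod⟩ := hC u hud
  have hNu : (N : ℝ) * u = t := by
    rw [hu, mul_comm, div_mul_cancel₀ t (ne_of_gt hNpos)]
  have hpowN : Tendsto (fun θ : ℝ => (f θ u) ^ N) (𝓝[>] (0:ℝ)) (𝓝 1) := by
    have h := hm1.pow K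
    simp only [one_pow] at h
    refine Tendsto.congr (fun θ => ?_) h
    rw [hN, pow_mul]
  have hdiff : Tendsto (fun θ : ℝ => f θ t - (f θ u) ^ N) (𝓝[>] (0:ℝ)) (𝓝 0) := by
    rw [tendsto_zero_iff_norm_tendsto_zero]
    refine squeeze_zero' (Eventually.of_forall fun θ => norm_nonneg _) ?_ ?_
      (g := fun θ => (N : ℝ) * Real.sqrt (1 - ‖f θ u‖ ^ 2))
    · filter_upwards [self_mem_nhdsWithin] with θ hθpos
      obtain ⟨ν, hνP, hνrep⟩ := hf θ hθpos
      haveI := hνP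
      have h1 : f θ t = Stmt17.cf ν ((N : ℝ) * u) := by
        rw [← hNu]
        exact hνrep _
      have h2 : f θ u = Stmt17.cf ν u := hνrep u
      rw [h1, h2]
      exact Stmt17.cf_pow_approx ν u N
    · have hcont : Continuous (fun r : ℝ => (N : ℝ) * Real.sqrt (1 - r ^ 2)) :=
        continuous_const.mul ((continuous_const.sub (continuous_pow 2)).sqrt)
      have h := (hcont.tendsto 1).comp hmod
      simpa [Function.comp_def] using h
  have hfinal := hdiff.add hpowN
  rw [zero_add] at hfinal
  refine Tendsto.congr (fun θ => ?_) hfinal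
  ring
end
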